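/- Let n ≥ 3 be odd and let c : ZMod n → ℝ satisfy: c(k) ≥ 0, Σ_k c(k) = 1, c(−k) = c(k), c(0) < 1, and c(1) > 0. Let W̃ be the circulant matrix with symbol c and let W = W̃² = W̃ᵀ·W̃. Then W is a symmetric circulant matrix whose eigenvalues are the squares λ_j² of the eigenvalues λ_j of W̃; they satisfy λ_0² = 1 and 0 ≤ λ_j² < 1 for every j ≠ 0. In particular the spectrum of W is contained in [0,1] and 1 is an eigenvalue of W of multiplicity one. -/

import Mathlib

open scoped Matrix


open Complex Finset

open scoped Matrix

set_option linter.unusedSectionVars false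
set_option maxHeartbeats 1000000

noncomputable def ffc (n : ℕ) (x : ZMod n) : ℂ :=
  Complex.exp (-2 * Real.pi * Complex.I * (x.val : ℂ) / (n : ℂ))

variable {n : ℕ} [NeZero n]

lemma ffc_nat (a : ℕ) :
    ffc n (a : ZMod n) = Complex.exp (-2 * Real.pi * Complex.I * (a : ℂ) / (n : ℂ)) := by
  have hn : (n : ℂ) ≠ 0 := Nat.cast_ne_zero.mpr (NeZero.ne n)
  have hval : ((a : ZMod n)).val = a % n := ZMod.val_natCast n a
  have ha : (a : ℂ) = ((a % n : ℕ) : ℂ) + (n : ℂ) * ((a / n : ℕ) : ℂ) := by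
    exact_mod_cast congrArg (Nat.cast : ℕ → ℂ) (Nat.mod_add_div a n).symm
  have hexp : Complex.exp ((-(((a / n : ℕ) : ℕ) : ℂ)) * (2 * Real.pi * Complex.I)) = 1 := by
    have h := Complex.exp_int_mul_two_pi_mul_I (-((a / n : ℕ) : ℤ))
    simp only [Int.cast_neg, Int.cast_natCast] at h
    exact h
  rw [ffc, hval]
  rw [show (-2 * Real.pi * Complex.I * (a : ℂ) / (n : ℂ))
      = -2 * Real.pi * Complex.I * ((a % n : ℕ) : ℂ) / (n : ℂ)
        + (-(((a / n : ℕ) : ℕ) : ℂ)) * (2 * Real.pi * Complex.I) by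
    rw [ha]; field_simp; ring]
  rw [Complex.exp_add, hexp, mul_one]

lemma ffc_add (x y : ZMod n) : ffc n (x + y) = ffc n x * ffc n y := by
  have hx : ((x.val : ℕ) : ZMod n) = x := ZMod.natCast_rightInverse x
  have hy : ((y.val : ℕ) : ZMod n) = y := ZMod.natCast_rightInverse y
  have hxy : x + y = ((x.val + y.val : ℕ) : ZMod n) := by push_cast [hx, hy]; ring
  rw [hxy, ffc_nat]
  conv_rhs => rw [← hx, ← hy, ffc_nat, ffc_nat]
  rw [← Complex.exp_add]
  congr 1
  push_cast
  ring

lemma ffc_zero : ffc n 0 = 1 := by simp [ffc]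

lemma ffc_pow (x : ZMod n) (m : ℕ) : ffc n (m • x) = ffc n x ^ m := by
  induction m with
  | zero => simp [ffc_zero]
  | succ k ih => rw [succ_nsmul, ffc_add, ih, pow_succ]

lemma ffc_neg_mul (x : ZMod n) : ffc n (-x) * ffc n x = 1 := by
  rw [← ffc_add, neg_add_cancel, ffc_zero]

lemma ffc_neg_nat (a : ℕ) :
    ffc n (-(a : ZMod n)) = Complex.exp (2 * Real.pi * Complex.I * (a : ℂ) / (n : ℂ)) := by
  have h := ffc_neg_mul (n := n) (a : ZMod n)
  rw [ffc_nat] at h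
  have h2 := eq_inv_of_mul_eq_one_left h
  rw [h2, ← Complex.exp_neg]
  congr 1
  ring

lemma zmod_val_pos {x : ZMod n} (hx : x ≠ 0) : 0 < x.val :=
  Nat.pos_of_ne_zero (fun h => hx (by
    have h2 := ZMod.natCast_rightInverse x
    rw [← h2, h, Nat.cast_zero]))

lemma ffc_ne_one {x : ZMod n} (hx : x ≠ 0) : ffc n x ≠ 1 := by
  have hvpos : 0 < x.val := zmod_val_pos hx
  have hvlt : x.val < n := ZMod.val_lt x
  intro h
  rw [ffc, Complex.exp_eq_one_iff] at h
  obtain ⟨k, hk⟩ := h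
  have hn : (n : ℂ) ≠ 0 := Nat.cast_ne_zero.mpr (NeZero.ne n)
  have h2pi : (2 * (Real.pi : ℂ) * Complex.I) ≠ 0 := by
    simp [Real.pi_ne_zero, Complex.I_ne_zero]
  have hk2 : (-(x.val : ℂ)) * (2 * (Real.pi : ℂ) * Complex.I)
      = ((k * (n : ℤ) : ℤ) : ℂ) * (2 * (Real.pi : ℂ) * Complex.I) := by
    have h := congrArg (fun z => z * (n : ℂ)) hk
    rw [div_mul_cancel₀ _ hn] at h
    push_cast
    linear_combination h
  have hk3 := mul_right_cancel₀ h2pi hk2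
  have hk4 : (-(x.val : ℤ)) = k * (n : ℤ) := by exact_mod_cast hk3
  have hv1 : (0 : ℤ) < (x.val : ℤ) := by exact_mod_cast hvpos
  have hv2 : ((x.val : ℤ)) < (n : ℤ) := by exact_mod_cast hvlt
  have h1 : k * (n : ℤ) < 0 := by omega
  have hnpos : (0 : ℤ) < (n : ℤ) := by
    exact_mod_cast Nat.pos_of_ne_zero (NeZero.ne n)
  have h2 : k ≤ -1 := by nlinarith
  have h3 : k * (n : ℤ) ≤ -1 * (n : ℤ) := mul_le_mul_of_nonneg_right h2 (le_of_lt hnpos)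
  omega

lemma zmod_sum_range {M : Type*} [AddCommMonoid M] (g : ZMod n → M) :
    ∑ k : ZMod n, g k = ∑ i ∈ Finset.range n, g (i : ZMod n) := by
  rw [← Fin.sum_univ_eq_sum_range]
  apply Fintype.sum_bijective (fun k : ZMod n => (⟨k.val, ZMod.val_lt k⟩ : Fin n))
  · constructor
    · intro a b hab
      have : a.val = b.val := by simpa using congrArg Fin.val hab
      exact ZMod.val_injective n this
    · intro i
      refine ⟨(i : ℕ), ?_⟩
      ext
      simp [ZMod.val_natCast, Nat.mod_eq_of_lt i.isLt]
  · intro k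
    congr 1
    exact (ZMod.natCast_rightInverse k).symm

lemma zmod_geom_sum {d : ZMod n} (hd : d ≠ 0) :
    ∑ j : ZMod n, ffc n (j * d) = 0 := by
  have key : ∀ j : ZMod n, ffc n (j * d) = ffc n d ^ j.val := by
    intro j
    have h : j.val • d = j * d := by
      rw [nsmul_eq_mul, ZMod.natCast_rightInverse j]
    rw [← h, ffc_pow]
  calc ∑ j : ZMod n, ffc n (j * d)
      = ∑ i ∈ Finset.range n, ffc n d ^ ((i : ZMod n)).val := by
        rw [zmod_sum_range (fun j => ffc n (j * d))]
        exact Finset.sum_congr rfl fun i _ => key _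
    _ = ∑ i ∈ Finset.range n, ffc n d ^ i := by
        apply Finset.sum_congr rfl
        intro i hi
        rw [ZMod.val_natCast, Nat.mod_eq_of_lt (Finset.mem_range.mp hi)]
    _ = 0 := by
        rw [geom_sum_eq (ffc_ne_one hd)]
        have hzn : ffc n d ^ n = 1 := by
          rw [← ffc_pow]
          have h0 : (n : ℕ) • d = 0 := by
            rw [nsmul_eq_mul, ZMod.natCast_self, zero_mul]
          rw [h0, ffc_zero]
        rw [hzn, sub_self, zero_div]

lemma zmod_sum_split (hodd : Odd n) {M : Type*} [AddCommMonoid M] (g : ZMod n → M) :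
    ∑ k : ZMod n, g k
      = g 0 + ∑ k ∈ Finset.Icc 1 ((n - 1) / 2), (g (k : ZMod n) + g (-(k : ZMod n))) := by
  obtain ⟨m, hm⟩ := hodd
  have hmn : (n - 1) / 2 = m := by omega
  have hnpos : 0 < n := by omega
  rw [zmod_sum_range, Finset.sum_range_eq_add_Ico _ hnpos, Nat.cast_zero, hmn]
  congr 1
  have hsplit : (∑ i ∈ Ico 1 (m + 1), g (i : ZMod n)) + ∑ i ∈ Ico (m + 1) n, g (i : ZMod n)
      = ∑ i ∈ Ico 1 n, g (i : ZMod n) :=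
    Finset.sum_Ico_consecutive _ (by omega) (by omega)
  rw [← hsplit]
  have h2 : ∑ i ∈ Ico (m + 1) n, g (i : ZMod n) = ∑ k ∈ Ico 1 (m + 1), g (-(k : ZMod n)) := by
    apply Finset.sum_nbij' (fun i => n - i) (fun k => n - k)
    · intro a ha; simp only [mem_Ico] at ha ⊢; omega
    · intro a ha; simp only [mem_Ico] at ha ⊢; omega
    · intro a ha; simp only [mem_Ico] at ha; omega
    · intro a ha; simp only [mem_Ico] at ha; omega
    · intro a ha
      simp only [mem_Ico] at ha
      congr 1
      have h3 : ((n - a : ℕ) : ZMod n) = (n : ZMod n) - (a : ZMod n) := by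
        rw [Nat.cast_sub (by omega)]
      rw [h3, ZMod.natCast_self, zero_sub, neg_neg]
  rw [h2, ← Finset.sum_add_distrib]
  apply Finset.sum_congr
  · rw [Finset.Ico_add_one_right_eq_Icc]
  · intros; rfl

lemma exp_pair (θ : ℝ) :
    Complex.exp (-(θ : ℂ) * Complex.I) + Complex.exp ((θ : ℂ) * Complex.I)
      = 2 * ((Real.cos θ : ℝ) : ℂ) := by
  rw [Complex.exp_mul_I, Complex.exp_mul_I, Complex.cos_neg, Complex.sin_neg, Complex.ofReal_cos]
  ring

lemma ffc_re (x : ZMod n) : (ffc n x).re = Real.cos (2 * Real.pi * (x.val : ℝ) / n) := by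
  rw [ffc, show (-2 * Real.pi * Complex.I * (x.val : ℂ) / n)
      = ((-(2 * Real.pi * (x.val : ℝ) / n) : ℝ) : ℂ) * Complex.I by push_cast; ring,
    Complex.exp_ofReal_mul_I_re, Real.cos_neg]

lemma eig_sum (hodd : Odd n) (c : ZMod n → ℝ) (hsym : ∀ k : ZMod n, c (-k) = c k) (j : ZMod n) :
    ∑ k : ZMod n, (c k : ℂ) * ffc n (j * k)
      = ((c 0 : ℝ) : ℂ) + 2 * ∑ k ∈ Finset.Icc 1 ((n - 1) / 2),
          ((c (k : ZMod n) : ℝ) : ℂ)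
            * ((Real.cos (2 * Real.pi * (j.val : ℝ) * (k : ℝ) / (n : ℝ)) : ℝ) : ℂ) := by
  rw [zmod_sum_split hodd]
  congr 1
  · rw [mul_zero, ffc_zero, mul_one]
  · rw [Finset.mul_sum]
    apply Finset.sum_congr rfl
    intro k _
    have hjk : j * ((k : ℕ) : ZMod n) = ((j.val * k : ℕ) : ZMod n) := by
      conv_lhs => rw [← ZMod.natCast_rightInverse j]
      push_cast; ring
    rw [hsym, hjk,
      show j * (-((k : ℕ) : ZMod n)) = -(((j.val * k : ℕ) : ZMod n)) by rw [mul_neg, hjk],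
      ffc_nat, ffc_neg_nat,
      show (-2 * Real.pi * Complex.I * ((j.val * k : ℕ) : ℂ) / (n : ℂ))
        = -(((2 * Real.pi * (j.val : ℝ) * (k : ℝ) / (n : ℝ) : ℝ)) : ℂ) * Complex.I by
        push_cast; ring,
      show (2 * Real.pi * Complex.I * ((j.val * k : ℕ) : ℂ) / (n : ℂ))
        = (((2 * Real.pi * (j.val : ℝ) * (k : ℝ) / (n : ℝ) : ℝ)) : ℂ) * Complex.I by
        push_cast; ring,
      ← mul_add, exp_pair]
    ring

lemma circ_eig (c : ZMod n → ℝ) (hsym : ∀ k : ZMod n, c (-k) = c k) (j : ZMod n) :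
    (Matrix.circulant (fun k => (c k : ℂ))).mulVec (fun q => ffc n (j * q))
      = (∑ k : ZMod n, (c k : ℂ) * ffc n (j * k)) • (fun q => ffc n (j * q)) := by
  funext p
  simp only [Matrix.mulVec, dotProduct, Matrix.circulant_apply, Pi.smul_apply,
    smul_eq_mul]
  calc ∑ q : ZMod n, (c (p - q) : ℂ) * ffc n (j * q)
      = ∑ k : ZMod n, (c k : ℂ) * ffc n (j * (p - k)) := by
        refine (Fintype.sum_equiv (Equiv.subLeft p) _ _ ?_).symm
        intro k
        rw [Equiv.subLeft_apply, sub_sub_cancel]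
    _ = (∑ k : ZMod n, (c k : ℂ) * ffc n (-(j * k))) * ffc n (j * p) := by
        rw [Finset.sum_mul]
        apply Finset.sum_congr rfl
        intro k _
        rw [show j * (p - k) = j * p + -(j * k) by ring, ffc_add]
        ring
    _ = (∑ k : ZMod n, (c k : ℂ) * ffc n (j * k)) * ffc n (j * p) := by
        congr 1
        refine Fintype.sum_equiv (Equiv.neg (ZMod n)) _ _ ?_
        intro k
        rw [Equiv.neg_apply, hsym, mul_neg]

lemma dft_inv :
    (Matrix.of fun q j : ZMod n => ffc n (j * q)) *
      (Matrix.of fun j q : ZMod n => ((n : ℂ))⁻¹ * ffc n (-(j * q))) = 1 := by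
  have hn : (n : ℂ) ≠ 0 := Nat.cast_ne_zero.mpr (NeZero.ne n)
  ext p q
  simp only [Matrix.mul_apply, Matrix.of_apply, Matrix.one_apply]
  have hstep : ∀ j : ZMod n, ffc n (j * p) * ((n : ℂ)⁻¹ * ffc n (-(j * q)))
      = (n : ℂ)⁻¹ * ffc n (j * (p - q)) := by
    intro j
    rw [show j * (p - q) = j * p + -(j * q) by ring, ffc_add]
    ring
  rw [Finset.sum_congr rfl (fun j _ => hstep j), ← Finset.mul_sum]
  by_cases hpq : p = q
  · subst hpq
    simp only [sub_self, mul_zero, ffc_zero, Finset.sum_const, Finset.card_univ,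
      ZMod.card, nsmul_eq_mul, mul_one, if_pos rfl]
    exact inv_mul_cancel₀ hn
  · rw [zmod_geom_sum (sub_ne_zero.mpr hpq), mul_zero, if_neg hpq]

/-- For `n ≥ 3` odd and a symbol `c : ZMod n → ℝ` that is nonnegative, sums to one, is
symmetric, with `c 0 < 1` and `c 1 > 0`, let `W̃` be the circulant matrix with symbol `c`
and `W = W̃² = W̃ᵀ W̃`. Then `W` is a symmetric circulant matrix, its eigenvalues are the
squares `λ_j²` of the eigenvalues `λ_j` of `W̃` (with eigenvectors `(u_j)_q = e^{-2πijq/n}`),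
they satisfy `λ_0² = 1` and `0 ≤ λ_j² < 1` for `j ≠ 0`; in particular the spectrum of `W`
is contained in `[0,1]` and `1` is an eigenvalue of `W` of multiplicity one. -/
theorem stmt14 (n : ℕ) [NeZero n] (hn : 3 ≤ n) (hodd : Odd n) (c : ZMod n → ℝ)
    (hnn : ∀ k : ZMod n, 0 ≤ c k) (hsum : ∑ k : ZMod n, c k = 1)
    (hsym : ∀ k : ZMod n, c (-k) = c k) (hc0 : c 0 < 1) (hc1 : 0 < c 1)
    (Wt W : Matrix (ZMod n) (ZMod n) ℝ)
    (hWt : Wt = Matrix.circulant c) (hWdef : W = Wt * Wt)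
    (u : ZMod n → ZMod n → ℂ)
    (hu : ∀ j q : ZMod n,
      u j q = Complex.exp (-2 * Real.pi * Complex.I * (j.val : ℂ) * (q.val : ℂ) / (n : ℂ)))
    (lam : ZMod n → ℝ)
    (hlam : ∀ j : ZMod n, lam j = c 0 + 2 * ∑ k ∈ Finset.Icc 1 ((n - 1) / 2),
      c (k : ZMod n) * Real.cos (2 * Real.pi * (j.val : ℝ) * (k : ℝ) / (n : ℝ))) :
    W = Wtᵀ * Wt ∧
    W.IsSymm ∧
    (∃ d : ZMod n → ℝ, W = Matrix.circulant d) ∧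
    (∀ j : ZMod n,
      (W.map (fun x : ℝ => (x : ℂ))).mulVec (u j) = (((lam j) ^ 2 : ℝ) : ℂ) • u j) ∧
    (∀ μ : ℂ, μ ∈ spectrum ℂ (W.map (fun x : ℝ => (x : ℂ))) →
      ∃ j : ZMod n, μ = (((lam j) ^ 2 : ℝ) : ℂ)) ∧
    (lam 0) ^ 2 = 1 ∧
    (∀ j : ZMod n, j ≠ 0 → 0 ≤ (lam j) ^ 2 ∧ (lam j) ^ 2 < 1) ∧
    ∀ j : ZMod n, (lam j) ^ 2 = 1 ↔ j = 0 := by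
  classical
  have hWtT : Wtᵀ = Wt := by
    rw [hWt, Matrix.transpose_circulant]
    exact congrArg _ (funext fun i => hsym i)
  -- u in terms of ffc
  have huf : ∀ j : ZMod n, u j = fun q => ffc n (j * q) := by
    intro j
    funext q
    have hjq : j * q = ((j.val * q.val : ℕ) : ZMod n) := by
      conv_lhs => rw [← ZMod.natCast_rightInverse j, ← ZMod.natCast_rightInverse q]
      push_cast
      ring
    rw [hu, hjq, ffc_nat]
    congr 1
    push_cast
    ring
  -- lam as a complex character sum
  have hlamC : ∀ j : ZMod n, ∑ k : ZMod n, (c k : ℂ) * ffc n (j * k) = ((lam j : ℝ) : ℂ) := by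
    intro j
    rw [eig_sum hodd c hsym j, hlam j]
    push_cast
    ring
  have hWtc : Wt.map (fun x : ℝ => (x : ℂ)) = Matrix.circulant (fun k => (c k : ℂ)) := by
    rw [hWt, Matrix.map_circulant]
  have heigWt : ∀ j : ZMod n,
      (Wt.map (fun x : ℝ => (x : ℂ))).mulVec (u j) = ((lam j : ℝ) : ℂ) • u j := by
    intro j
    rw [hWtc, huf j, circ_eig c hsym j, hlamC j]
  have hWc : W.map (fun x : ℝ => (x : ℂ))
      = (Wt.map (fun x : ℝ => (x : ℂ))) * (Wt.map (fun x : ℝ => (x : ℂ))) := by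
    rw [hWdef]
    exact Matrix.map_mul (f := Complex.ofRealHom)
  have heigW : ∀ j : ZMod n,
      (W.map (fun x : ℝ => (x : ℂ))).mulVec (u j) = (((lam j : ℝ) : ℂ)) ^ 2 • u j := by
    intro j
    rw [hWc, ← Matrix.mulVec_mulVec, heigWt j, Matrix.mulVec_smul, heigWt j, smul_smul, sq]
  -- lam 0 = 1
  have hsplitc := zmod_sum_split hodd c
  rw [hsum] at hsplitc
  have hlam0 : lam 0 = 1 := by
    have hsum2 : ∑ k ∈ Finset.Icc 1 ((n - 1) / 2), (c (k : ZMod n) + c (-(k : ZMod n)))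
        = 2 * ∑ k ∈ Finset.Icc 1 ((n - 1) / 2), c (k : ZMod n) := by
      rw [Finset.mul_sum]
      apply Finset.sum_congr rfl
      intro k _
      rw [hsym, two_mul]
    rw [hsum2] at hsplitc
    rw [hlam 0]
    have hz : ∑ k ∈ Finset.Icc 1 ((n - 1) / 2),
        c (k : ZMod n) * Real.cos (2 * Real.pi * (((0 : ZMod n)).val : ℝ) * (k : ℝ) / (n : ℝ))
        = ∑ k ∈ Finset.Icc 1 ((n - 1) / 2), c (k : ZMod n) := by
      apply Finset.sum_congr rfl
      intro k _
      rw [ZMod.val_zero]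
      norm_num
    rw [hz]
    linarith
  -- |lam j| < 1 for j ≠ 0
  have habs : ∀ j : ZMod n, j ≠ 0 → |lam j| < 1 := by
    intro j hj
    have hre : lam j = ∑ k : ZMod n, c k * (ffc n (j * k)).re := by
      have h1 := congrArg Complex.re (hlamC j)
      rw [Complex.ofReal_re, Complex.re_sum] at h1
      rw [← h1]
      apply Finset.sum_congr rfl
      intro k _
      rw [Complex.re_ofReal_mul]
    have hb : |lam j| ≤ ∑ k : ZMod n, c k * |(ffc n (j * k)).re| := by
      rw [hre]
      refine (Finset.abs_sum_le_sum_abs _ _).trans (le_of_eq ?_)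
      apply Finset.sum_congr rfl
      intro k _
      rw [abs_mul, _root_.abs_of_nonneg (hnn k)]
    have hstrict : ∑ k : ZMod n, c k * |(ffc n (j * k)).re| < 1 := by
      rw [← hsum]
      apply Finset.sum_lt_sum
      · intro k _
        have h1 : |(ffc n (j * k)).re| ≤ 1 := by
          rw [ffc_re]
          exact Real.abs_cos_le_one _
        nlinarith [hnn k]
      · refine ⟨1, Finset.mem_univ _, ?_⟩
        have hcos : |(ffc n (j * 1)).re| < 1 := by
          rw [mul_one, ffc_re]
          set θ := 2 * Real.pi * ((j.val : ℕ) : ℝ) / (n : ℝ) with hθ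
          have hvpos : 0 < j.val := zmod_val_pos hj
          have hvlt : j.val < n := ZMod.val_lt j
          have hsin : Real.sin θ ≠ 0 := by
            intro hs
            rw [Real.sin_eq_zero_iff] at hs
            obtain ⟨k, hk⟩ := hs
            have hnR : (n : ℝ) ≠ 0 := Nat.cast_ne_zero.mpr (NeZero.ne n)
            have hmul := congrArg (fun z => z * (n : ℝ)) hk
            rw [hθ, div_mul_cancel₀ _ hnR] at hmul
            have h2 : Real.pi * ((k : ℝ) * n) = Real.pi * (2 * (j.val : ℝ)) := by
              linear_combination hmul
            have h3 := mul_left_cancel₀ Real.pi_ne_zero h2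
            have h4 : k * (n : ℤ) = 2 * (j.val : ℤ) := by exact_mod_cast h3
            have hv1 : (0 : ℤ) < (j.val : ℤ) := by exact_mod_cast hvpos
            have hv2 : ((j.val : ℤ)) < (n : ℤ) := by exact_mod_cast hvlt
            have hnZ : (0 : ℤ) < (n : ℤ) := by positivity
            have hk1 : k = 1 := by nlinarith
            rw [hk1, one_mul] at h4
            obtain ⟨m, hm⟩ := hodd
            have hmZ : (n : ℤ) = 2 * (m : ℤ) + 1 := by exact_mod_cast hm
            omega
          have hpyth := Real.sin_sq_add_cos_sq θ
          have hs2 : 0 < Real.sin θ ^ 2 :=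
            lt_of_le_of_ne (sq_nonneg _) (Ne.symm (pow_ne_zero 2 hsin))
          have hc2 : Real.cos θ ^ 2 < 1 := by nlinarith
          exact abs_lt.mpr ⟨by nlinarith [abs_nonneg (Real.cos θ)], by nlinarith⟩
        calc c 1 * |(ffc n (j * 1)).re| < c 1 * 1 := by
              exact mul_lt_mul_of_pos_left hcos hc1
          _ = c 1 := mul_one _
    exact lt_of_le_of_lt hb hstrict
  have hlt : ∀ j : ZMod n, j ≠ 0 → (lam j) ^ 2 < 1 := by
    intro j hj
    calc (lam j) ^ 2 = |lam j| ^ 2 := (_root_.sq_abs _).symm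
      _ < 1 := by nlinarith [habs j hj, abs_nonneg (lam j)]
  -- spectrum containment
  have hspec : ∀ μ : ℂ, μ ∈ spectrum ℂ (W.map (fun x : ℝ => (x : ℂ))) →
      ∃ j : ZMod n, μ = (((lam j : ℝ) : ℂ)) ^ 2 := by
    intro μ hμ
    set Wc := W.map (fun x : ℝ => (x : ℂ)) with hWcdef
    set p : Polynomial ℂ :=
      ∏ j : ZMod n, (Polynomial.X - Polynomial.C (((lam j : ℝ) : ℂ) ^ 2)) with hp
    have hMU : ∀ j : ZMod n, (Polynomial.aeval Wc p).mulVec (u j) = 0 := by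
      intro j
      have hfac : p = (∏ x ∈ Finset.univ.erase j,
            (Polynomial.X - Polynomial.C (((lam x : ℝ) : ℂ) ^ 2)))
          * (Polynomial.X - Polynomial.C (((lam j : ℝ) : ℂ) ^ 2)) :=
        (Finset.prod_erase_mul _ _ (Finset.mem_univ j)).symm
      rw [hfac, map_mul, ← Matrix.mulVec_mulVec]
      have hz : (Polynomial.aeval Wc
            (Polynomial.X - Polynomial.C (((lam j : ℝ) : ℂ) ^ 2))).mulVec (u j) = 0 := by
        rw [map_sub, Polynomial.aeval_X, Polynomial.aeval_C, Matrix.sub_mulVec, heigW j,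
          Algebra.algebraMap_eq_smul_one, Matrix.smul_mulVec, Matrix.one_mulVec,
          sub_self]
      rw [hz, Matrix.mulVec_zero]
    have hM0 : Polynomial.aeval Wc p = 0 := by
      have hMU' : (Polynomial.aeval Wc p) * (Matrix.of fun q j : ZMod n => ffc n (j * q)) = 0 := by
        ext q j
        have h1 := congrFun (hMU j) q
        rw [huf j] at h1
        simp only [Matrix.mulVec, dotProduct, Pi.zero_apply] at h1
        simpa [Matrix.mul_apply, Matrix.of_apply] using h1
      calc Polynomial.aeval Wc p
          = (Polynomial.aeval Wc p) * ((Matrix.of fun q j : ZMod n => ffc n (j * q)) *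
              (Matrix.of fun j q : ZMod n => ((n : ℂ))⁻¹ * ffc n (-(j * q)))) := by
            rw [dft_inv, mul_one]
        _ = ((Polynomial.aeval Wc p) * (Matrix.of fun q j : ZMod n => ffc n (j * q))) *
              (Matrix.of fun j q : ZMod n => ((n : ℂ))⁻¹ * ffc n (-(j * q))) := by
            rw [mul_assoc]
        _ = 0 := by rw [hMU', zero_mul]
    have hev : Polynomial.eval μ p ∈ spectrum ℂ (Polynomial.aeval Wc p) :=
      spectrum.subset_polynomial_aeval Wc p ⟨μ, hμ, rfl⟩
    rw [hM0, spectrum.zero_eq] at hev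
    have h0 : Polynomial.eval μ p = 0 := Set.mem_singleton_iff.mp hev
    rw [hp, Polynomial.eval_prod] at h0
    obtain ⟨j, _, hj⟩ := Finset.prod_eq_zero_iff.mp h0
    simp only [Polynomial.eval_sub, Polynomial.eval_X, Polynomial.eval_C] at hj
    exact ⟨j, by linear_combination hj⟩
  refine ⟨by rw [hWdef, hWtT], ?_, ?_, ?_, ?_, ?_, ?_, ?_⟩
  · show Wᵀ = W
    rw [hWdef, Matrix.transpose_mul, hWtT]
  · exact ⟨_, by rw [hWdef, hWt, Matrix.circulant_mul]⟩
  · intro j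
    rw [heigW j, Complex.ofReal_pow]
  · intro μ hμ
    obtain ⟨j, hj⟩ := hspec μ hμ
    exact ⟨j, by rw [hj, Complex.ofReal_pow]⟩
  · rw [hlam0, one_pow]
  · exact fun j hj => ⟨sq_nonneg _, hlt j hj⟩
  · intro j
    constructor
    · intro h
      by_contra hj
      exact absurd h (ne_of_lt (hlt j hj))
    · intro h
      rw [h, hlam0, one_pow]
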